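/- For non-negative integers $j$ and $k$, not both zero, $\sum_{i=0}^{k}(-1)^i\binom{k}{i}\binom{i/2}{j} = (-1)^j 2^{k-2j}\frac{k}{j}\binom{2j-k-1}{j-k}$, and the sum equals $1$ when $j=k=0$. -/

import Mathlib

/-- Generalized binomial coefficient `x choose m` for `x : ℝ` and `m : ℤ`,
defined to be `0` for negative `m`. -/
noncomputable def gchooseZ (x : ℝ) (m : ℤ) : ℝ :=
  if 0 ≤ m then (∏ i ∈ Finset.range m.toNat, (x - i)) / (m.toNat).factorial else 0

lemma gz_neg (x : ℝ) {m : ℤ} (h : m < 0) : gchooseZ x m = 0 := by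
  simp [gchooseZ, not_le.mpr h]

lemma gz_coe (x : ℝ) (n : ℕ) :
    gchooseZ x (n : ℤ) = (∏ i ∈ Finset.range n, (x - i)) / n.factorial := by
  simp [gchooseZ]

lemma gz_zero (x : ℝ) : gchooseZ x 0 = 1 := by simp [gchooseZ]

lemma gz_succ (x : ℝ) (n : ℕ) :
    gchooseZ x ((n : ℤ) + 1) = gchooseZ x n * (x - n) / (n + 1) := by
  have h : ((n : ℤ) + 1) = ((n + 1 : ℕ) : ℤ) := by push_cast; ring
  rw [h, gz_coe, gz_coe, Finset.prod_range_succ, Nat.factorial_succ]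
  push_cast
  rw [div_mul_eq_mul_div, div_div, mul_comm ((n : ℝ) + 1)]

lemma gz_pascal (x : ℝ) (m : ℤ) :
    gchooseZ (x + 1) m = gchooseZ x m + gchooseZ x (m - 1) := by
  rcases lt_trichotomy m 0 with h | h | h
  · rw [gz_neg _ h, gz_neg _ h, gz_neg _ (by omega), add_zero]
  · subst h
    rw [gz_zero, gz_zero, gz_neg _ (by norm_num), add_zero]
  · obtain ⟨n, rfl⟩ : ∃ n : ℕ, m = (n : ℤ) + 1 := ⟨(m - 1).toNat, by omega⟩
    have h1 : ((n : ℤ) + 1 - 1) = (n : ℤ) := by ring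
    rw [h1, gz_succ, gz_succ, gz_coe]
    have key : ∏ i ∈ Finset.range (n + 1), (x + 1 - i) =
        (∏ i ∈ Finset.range n, (x - i)) * (x + 1) := by
      rw [Finset.prod_range_succ']
      congr 1
      · exact Finset.prod_congr rfl fun i _ => by push_cast; ring
      · norm_num
    have hcoe : gchooseZ (x + 1) (n : ℤ) = (∏ i ∈ Finset.range n, (x + 1 - i)) / n.factorial :=
      gz_coe _ n
    have hn : (n.factorial : ℝ) ≠ 0 := by positivity
    have hn1 : (n : ℝ) + 1 ≠ 0 := by positivity
    rw [gz_coe]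
    rw [Finset.prod_range_succ] at key
    field_simp
    linear_combination key

lemma gz_natnat (a b : ℕ) : gchooseZ (a : ℝ) (b : ℤ) = (a.choose b : ℝ) := by
  induction a generalizing b with
  | zero =>
    cases b with
    | zero => simpa using gz_zero 0
    | succ n =>
      rw [gz_coe]
      rw [Finset.prod_eq_zero (Finset.mem_range.mpr (Nat.succ_pos n))]
      · simp
      · simp
  | succ a ih =>
    have : ((a : ℝ) + 1) = (a : ℝ) + 1 := rfl
    cases b with
    | zero => simpa using gz_zero _
    | succ n =>
      have h := gz_pascal (a : ℝ) ((n : ℤ) + 1)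
      push_cast
      have ih1 := ih (n + 1)
      push_cast at ih1
      rw [h, show ((n : ℤ) + 1 - 1) = (n : ℤ) by ring, ih1, ih n]
      rw [Nat.choose_succ_succ]
      push_cast
      ring

lemma gz_zero_left (j : ℕ) : gchooseZ 0 ((j : ℤ)) = if j = 0 then 1 else 0 := by
  cases j with
  | zero => simpa using gz_zero 0
  | succ n =>
    rw [gz_coe, Finset.prod_eq_zero (Finset.mem_range.mpr (Nat.succ_pos n))]
    · simp
    · simp

lemma gz_half (j : ℕ) : gchooseZ (1/2 : ℝ) ((j : ℤ) + 1) =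
    (-1) ^ j * (Nat.centralBinom j : ℝ) / ((j + 1) * 2 ^ (2 * j + 1)) := by
  induction j with
  | zero =>
    have h0 := gz_succ (1/2 : ℝ) 0
    norm_num [gz_zero] at h0
    norm_num [Nat.centralBinom, h0]
  | succ n ih =>
    have h := gz_succ (1/2 : ℝ) (n + 1)
    push_cast at h ⊢
    rw [h]
    rw [show ((n : ℤ) + 1) = (n : ℤ) + 1 from rfl] at ih
    push_cast at ih
    rw [ih]
    have hcb := Nat.succ_mul_centralBinom_succ n
    have hcb' : ((n : ℝ) + 1) * (Nat.centralBinom (n + 1) : ℝ)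
        = 2 * (2 * n + 1) * (Nat.centralBinom n : ℝ) := by exact_mod_cast hcb
    have h1 : ((n : ℝ) + 1) ≠ 0 := by positivity
    have h2 : ((n : ℝ) + 2) ≠ 0 := by positivity
    have h3 : (2 : ℝ) ^ (2 * n + 1) ≠ 0 := by positivity
    field_simp
    linear_combination ((-1 : ℝ)^n * 2^(2*n+2)) * hcb'

noncomputable def Sf (j : ℤ) (k : ℕ) : ℝ :=
  ∑ i ∈ Finset.range (k + 1), (-1 : ℝ) ^ i * (k.choose i : ℝ) * gchooseZ ((i : ℝ) / 2) j

noncomputable def Tf (j : ℤ) (k : ℕ) : ℝ :=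
  ∑ i ∈ Finset.range (k + 1), (-1 : ℝ) ^ i * (k.choose i : ℝ) * gchooseZ (((i : ℝ) + 1) / 2) j

lemma L1 (j : ℤ) (k : ℕ) : Sf j (k + 1) = Sf j k - Tf j k := by
  have e1 : Sf j (k + 1) =
      (∑ i ∈ Finset.range (k + 1),
        (-1 : ℝ) ^ (i+1) * ((k+1).choose (i+1) : ℝ) * gchooseZ (((i:ℝ) + 1) / 2) j)
      + gchooseZ 0 j := by
    rw [Sf, Finset.sum_range_succ']
    push_cast
    norm_num
  have e2 : ∀ i ∈ Finset.range (k + 1),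
      (-1 : ℝ) ^ (i+1) * ((k+1).choose (i+1) : ℝ) * gchooseZ (((i:ℝ) + 1) / 2) j
      = -((-1 : ℝ) ^ i * (k.choose i : ℝ) * gchooseZ (((i:ℝ) + 1) / 2) j)
        + (-1 : ℝ) ^ (i+1) * (k.choose (i+1) : ℝ) * gchooseZ (((i:ℝ) + 1) / 2) j := by
    intro i _
    rw [Nat.choose_succ_succ]
    push_cast
    ring
  have e3 : (∑ i ∈ Finset.range (k + 1),
      (-1 : ℝ) ^ (i+1) * (k.choose (i+1) : ℝ) * gchooseZ (((i:ℝ) + 1) / 2) j)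
      = Sf j k - gchooseZ 0 j := by
    rw [Finset.sum_range_succ, Nat.choose_succ_self, Sf, Finset.sum_range_succ']
    push_cast
    norm_num
  rw [e1, Finset.sum_congr rfl e2, Finset.sum_add_distrib, Finset.sum_neg_distrib, e3, Tf]
  ring

lemma L2 (j : ℤ) (k : ℕ) : Tf j (k + 1) = Tf j k - Sf j k - Sf (j-1) k := by
  have e1 : Tf j (k + 1) =
      (∑ i ∈ Finset.range (k + 1),
        (-1 : ℝ) ^ (i+1) * ((k+1).choose (i+1) : ℝ) * gchooseZ (((i:ℝ) + 1 + 1) / 2) j)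
      + gchooseZ (1/2) j := by
    rw [Tf, Finset.sum_range_succ']
    push_cast
    norm_num
  have e2 : ∀ i ∈ Finset.range (k + 1),
      (-1 : ℝ) ^ (i+1) * ((k+1).choose (i+1) : ℝ) * gchooseZ (((i:ℝ) + 1 + 1) / 2) j
      = -((-1 : ℝ) ^ i * (k.choose i : ℝ) *
            (gchooseZ ((i:ℝ)/2) j + gchooseZ ((i:ℝ)/2) (j-1)))
        + (-1 : ℝ) ^ (i+1) * (k.choose (i+1) : ℝ) * gchooseZ (((i:ℝ) + 1 + 1) / 2) j := by
    intro i _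
    rw [Nat.choose_succ_succ]
    have hp : gchooseZ (((i:ℝ) + 1 + 1) / 2) j
        = gchooseZ ((i:ℝ)/2) j + gchooseZ ((i:ℝ)/2) (j-1) := by
      rw [show ((i:ℝ) + 1 + 1)/2 = (i:ℝ)/2 + 1 by ring, gz_pascal]
    rw [hp]
    push_cast
    ring
  have e3 : (∑ i ∈ Finset.range (k + 1),
      (-1 : ℝ) ^ (i+1) * (k.choose (i+1) : ℝ) * gchooseZ (((i:ℝ) + 1 + 1) / 2) j)
      = Tf j k - gchooseZ (1/2) j := by
    rw [Finset.sum_range_succ, Nat.choose_succ_self, Tf, Finset.sum_range_succ']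
    push_cast
    norm_num
  rw [e1, Finset.sum_congr rfl e2, Finset.sum_add_distrib, Finset.sum_neg_distrib, e3]
  have e4 : ∀ i ∈ Finset.range (k + 1),
      (-1 : ℝ) ^ i * (k.choose i : ℝ) *
          (gchooseZ ((i:ℝ)/2) j + gchooseZ ((i:ℝ)/2) (j-1))
      = (-1 : ℝ) ^ i * (k.choose i : ℝ) * gchooseZ ((i:ℝ)/2) j
        + (-1 : ℝ) ^ i * (k.choose i : ℝ) * gchooseZ ((i:ℝ)/2) (j-1) := by
    intro i _; ring
  rw [Finset.sum_congr rfl e4, Finset.sum_add_distrib, Sf, Sf]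
  ring

lemma Srec (j : ℤ) (k : ℕ) : Sf j (k + 2) = 2 * Sf j (k + 1) + Sf (j-1) k := by
  have h1 := L1 j (k + 1)
  have h2 := L1 j k
  have h3 := L2 j k
  have : Sf j (k+2) = Sf j (k+1) - Tf j (k+1) := h1
  rw [this, h3]
  have ht : Tf j k = Sf j k - Sf j (k+1) := by linarith [h2]
  rw [ht]
  ring

noncomputable def Rf (j k : ℕ) : ℝ :=
  if j = 0 ∧ k = 0 then 1
  else (-1 : ℝ) ^ j * (2 : ℝ) ^ ((k : ℤ) - 2 * j) * ((k : ℝ) / j) *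
    gchooseZ ((2 * (j : ℤ) - k - 1 : ℤ) : ℝ) ((j : ℤ) - k)

lemma Rf_lt {j k : ℕ} (h : j < k) : Rf j k = 0 := by
  rw [Rf, if_neg (by omega)]
  rw [gz_neg _ (by omega : (j : ℤ) - k < 0), mul_zero]

lemma Rf_zero_pos (k : ℕ) (hk : k ≠ 0) : Rf 0 k = 0 := by
  rw [Rf, if_neg (by simp [hk])]
  norm_num

lemma Rf_val {j k : ℕ} (hj : 1 ≤ j) (hk : k ≤ j) :
    Rf j k = (-1 : ℝ) ^ j * (2 : ℝ) ^ ((k : ℤ) - 2 * j) * ((k : ℝ) / j) *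
      ((2 * j - k - 1).choose (j - k) : ℝ) := by
  rw [Rf, if_neg (by omega)]
  congr 1
  rw [show (2 * (j : ℤ) - k - 1 : ℤ) = ((2 * j - k - 1 : ℕ) : ℤ) by omega,
    show (j : ℤ) - k = ((j - k : ℕ) : ℤ) by omega, Int.cast_natCast]
  exact gz_natnat _ _

lemma Sneg (k : ℕ) : Sf (-1) k = 0 := by
  rw [Sf]
  refine Finset.sum_eq_zero fun i _ => ?_
  rw [gz_neg _ (by norm_num), mul_zero]

lemma Rdiag (n : ℕ) : 2 * Rf (n+1) (n+1) + Rf n n = 0 := by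
  have h1 : Rf (n+1) (n+1) = (-1 : ℝ) ^ (n+1) * (2 : ℝ) ^ (-(n+1 : ℕ) : ℤ) := by
    rw [Rf_val (by omega) (by omega)]
    rw [show 2 * (n+1) - (n+1) - 1 = n by omega, show (n+1) - (n+1) = 0 by omega,
      Nat.choose_zero_right]
    rw [show ((n+1 : ℕ) : ℤ) - 2 * (n+1 : ℕ) = (-(n+1 : ℕ) : ℤ) by push_cast; ring]
    have : ((n+1 : ℕ) : ℝ) ≠ 0 := by positivity
    field_simp
    norm_num
  have h2 : Rf n n = (-1 : ℝ) ^ n * (2 : ℝ) ^ (-(n : ℕ) : ℤ) := by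
    cases n with
    | zero => simp [Rf]
    | succ p =>
      rw [Rf_val (by omega) (by omega)]
      rw [show 2 * (p+1) - (p+1) - 1 = p by omega, show (p+1) - (p+1) = 0 by omega,
        Nat.choose_zero_right]
      rw [show ((p+1 : ℕ) : ℤ) - 2 * (p+1 : ℕ) = (-(p+1 : ℕ) : ℤ) by push_cast; ring]
      have : ((p+1 : ℕ) : ℝ) ≠ 0 := by positivity
      field_simp
      norm_num
  rw [h1, h2, zpow_neg, zpow_neg, zpow_natCast, zpow_natCast]
  have h3 : (2 : ℝ) ^ (n+1) ≠ 0 := by positivity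
  have h4 : (2 : ℝ) ^ n ≠ 0 := by positivity
  field_simp
  ring

lemma Rstep (n m : ℕ) : Rf (n+m+2) (n+2) = 2 * Rf (n+m+2) (n+1) + Rf (n+m+1) n := by
  have e1 : Rf (n+m+2) (n+2) = (-1 : ℝ) ^ (n+m+2) * ((2:ℝ) ^ (n+2*m+2))⁻¹ *
      (((n:ℝ)+2) / ((n:ℝ)+m+2)) * ((n+2*m+1).choose m : ℝ) := by
    rw [Rf_val (by omega) (by omega),
      show 2*(n+m+2) - (n+2) - 1 = n+2*m+1 by omega, show (n+m+2) - (n+2) = m by omega,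
      show ((n+2 : ℕ) : ℤ) - 2 * (n+m+2 : ℕ) = (-(n+2*m+2 : ℕ) : ℤ) by push_cast; ring,
      zpow_neg, zpow_natCast]
    push_cast
    ring
  have e2 : Rf (n+m+2) (n+1) = (-1 : ℝ) ^ (n+m+2) * ((2:ℝ) ^ (n+2*m+3))⁻¹ *
      (((n:ℝ)+1) / ((n:ℝ)+m+2)) * ((n+2*m+2).choose (m+1) : ℝ) := by
    rw [Rf_val (by omega) (by omega),
      show 2*(n+m+2) - (n+1) - 1 = n+2*m+2 by omega, show (n+m+2) - (n+1) = m+1 by omega,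
      show ((n+1 : ℕ) : ℤ) - 2 * (n+m+2 : ℕ) = (-(n+2*m+3 : ℕ) : ℤ) by push_cast; ring,
      zpow_neg, zpow_natCast]
    push_cast
    ring
  have e3 : Rf (n+m+1) n = (-1 : ℝ) ^ (n+m+1) * ((2:ℝ) ^ (n+2*m+2))⁻¹ *
      ((n:ℝ) / ((n:ℝ)+m+1)) * ((n+2*m+1).choose (m+1) : ℝ) := by
    rw [Rf_val (by omega) (by omega),
      show 2*(n+m+1) - n - 1 = n+2*m+1 by omega, show (n+m+1) - n = m+1 by omega,
      show ((n : ℕ) : ℤ) - 2 * (n+m+1 : ℕ) = (-(n+2*m+2 : ℕ) : ℤ) by push_cast; ring,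
      zpow_neg, zpow_natCast]
    push_cast
    ring
  have hP : ((n+2*m+2).choose (m+1) : ℝ)
      = ((n+2*m+1).choose m : ℝ) + ((n+2*m+1).choose (m+1) : ℝ) := by
    rw [show n+2*m+2 = (n+2*m+1)+1 by omega]
    exact_mod_cast congrArg (Nat.cast (R := ℝ)) (Nat.choose_succ_succ (n+2*m+1) m)
  have hX : ((n+2*m+1).choose (m+1) : ℝ) * ((m:ℝ)+1)
      = ((n+2*m+1).choose m : ℝ) * ((n:ℝ)+m+1) := by
    have := Nat.choose_succ_right_eq (n+2*m+1) m
    rw [show n+2*m+1-m = n+m+1 by omega] at this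
    exact_mod_cast congrArg (Nat.cast (R := ℝ)) this
  rw [e1, e2, e3]
  have d1 : ((n:ℝ)+m+2) ≠ 0 := by positivity
  have d2 : ((n:ℝ)+m+1) ≠ 0 := by positivity
  have d3 : (2:ℝ) ^ (n+2*m+2) ≠ 0 := by positivity
  have d4 : (2:ℝ) ^ (n+2*m+3) ≠ 0 := by positivity
  field_simp
  rw [hP]
  linear_combination (-2 * (-1:ℝ)^(n+m+2) * (2:ℝ)^(n+2*m+2)) * hX

lemma base0 (j : ℕ) : Sf j 0 = Rf j 0 := by
  have h : Sf j 0 = if j = 0 then 1 else 0 := by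
    rw [Sf]
    simp [gz_zero_left j]
  rw [h, Rf]
  rcases eq_or_ne j 0 with rfl | hj
  · simp
  · rw [if_neg hj, if_neg (by simp [hj])]
    norm_num

lemma base1 (j : ℕ) : Sf j 1 = Rf j 1 := by
  have h : Sf j 1 = gchooseZ 0 j - gchooseZ (1/2) j := by
    rw [Sf, Finset.sum_range_succ, Finset.sum_range_one]
    norm_num
    ring
  rw [h]
  cases j with
  | zero =>
    rw [Rf, if_neg (by norm_num)]
    norm_num [gz_zero_left 0]
    rw [gz_zero, gz_zero]
    norm_num
  | succ p =>
    rw [gz_zero_left, if_neg (by omega)]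
    have hh := gz_half p
    rw [show ((p:ℤ)+1) = ((p+1:ℕ):ℤ) by push_cast; ring] at hh
    rw [hh, Rf_val (by omega) (by omega),
      show 2*(p+1) - 1 - 1 = 2*p by omega, show (p+1) - 1 = p by omega,
      show ((1:ℕ):ℤ) - 2*(p+1:ℕ) = (-(2*p+1:ℕ) : ℤ) by push_cast; ring,
      zpow_neg, zpow_natCast]
    have hcb : (Nat.centralBinom p : ℝ) = ((2*p).choose p : ℝ) := by
      rw [Nat.centralBinom]
    rw [← hcb]
    have d1 : ((p:ℝ)+1) ≠ 0 := by positivity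
    have d2 : (2:ℝ)^(2*p+1) ≠ 0 := by positivity
    push_cast
    field_simp
    ring

theorem main (k : ℕ) : ∀ j : ℕ, Sf j k = Rf j k := by
  induction k using Nat.strong_induction_on with
  | _ k ih =>
    match k with
    | 0 => exact base0
    | 1 => exact base1
    | (n+2) =>
      intro j
      rw [Srec]
      cases j with
      | zero =>
        rw [show ((0:ℕ):ℤ) - 1 = (-1:ℤ) by norm_num, Sneg,
          ih (n+1) (by omega) 0, Rf_zero_pos (n+1) (by omega),
          Rf_zero_pos (n+2) (by omega)]
        ring
      | succ p =>
        rw [show ((p+1:ℕ):ℤ) - 1 = ((p:ℕ):ℤ) by push_cast; ring,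
          ih (n+1) (by omega) (p+1), ih n (by omega) p]
        rcases lt_trichotomy p n with h | rfl | h
        · rw [Rf_lt (show p+1 < n+2 by omega), Rf_lt (show p+1 < n+1 by omega), Rf_lt h]
          ring
        · rw [Rf_lt (show p+1 < p+2 by omega)]
          linarith [Rdiag p]
        · obtain ⟨m, rfl⟩ : ∃ m, p = n + m + 1 := ⟨p - n - 1, by omega⟩
          rw [show n+m+1+1 = n+m+2 by omega]
          linarith [Rstep n m]

theorem stmt1 (j k : ℕ) :
    (∑ i ∈ Finset.range (k + 1), (-1 : ℝ) ^ i * (k.choose i : ℝ) * gchooseZ ((i : ℝ) / 2) j) =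
      if j = 0 ∧ k = 0 then 1
      else (-1 : ℝ) ^ j * (2 : ℝ) ^ ((k : ℤ) - 2 * j) * ((k : ℝ) / j) *
        gchooseZ ((2 * (j : ℤ) - k - 1 : ℤ) : ℝ) ((j : ℤ) - k) := by
  exact main k j
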